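/- Let f : [0,1] → S¹ be f(x) = exp(2πix) and g : [0,1] → S¹ be g(y) = exp(πi(2y+1)). Suppose W is a nonempty topological space and r, s : W → [0,1] are continuous surjections with f ∘ r = g ∘ s. Then W is disconnected. -/
import Mathlib


open Complex Real

theorem no_amalgamation_circle
    (W : Type*) [TopologicalSpace W] [Nonempty W]
    (r s : W → Set.Icc (0 : ℝ) 1)
    (hr : Continuous r) (hs : Continuous s)
    (hrsurj : Function.Surjective r) (hssurj : Function.Surjective s)
    (hcomm : ∀ w, Complex.exp (2 * Real.pi * Complex.I * (r w : ℝ))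
      = Complex.exp (Real.pi * Complex.I * (2 * (s w : ℝ) + 1))) :
    ¬ ConnectedSpace W := by
  intro hW
  -- key dichotomy
  have key : ∀ w, (r w : ℝ) - (s w : ℝ) = 1/2 ∨ (r w : ℝ) - (s w : ℝ) = -(1/2) := by
    intro w
    have h := (Complex.exp_eq_exp_iff_exists_int).mp (hcomm w)
    obtain ⟨n, hn⟩ := h
    have hπ : (Real.pi : ℂ) ≠ 0 := by exact_mod_cast Real.pi_ne_zero
    have hI : Complex.I ≠ 0 := Complex.I_ne_zero
    have h2 : (2 : ℂ) * (r w : ℝ) = 2 * (s w : ℝ) + 1 + 2 * n := by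
      have : (Real.pi : ℂ) * Complex.I * (2 * (r w : ℝ))
          = (Real.pi : ℂ) * Complex.I * (2 * (s w : ℝ) + 1 + 2 * n) := by
        ring_nf
        ring_nf at hn
        linear_combination hn
      exact mul_left_cancel₀ (mul_ne_zero hπ hI) this
    have hreal : 2 * (r w : ℝ) = 2 * (s w : ℝ) + 1 + 2 * n := by
      exact_mod_cast h2
    have hr0 := (r w).2.1
    have hr1 := (r w).2.2
    have hs0 := (s w).2.1
    have hs1 := (s w).2.2
    have hn' : (n : ℝ) = 0 ∨ (n : ℝ) = -1 := by
      have hl : (-2 : ℤ) < n := by exact_mod_cast (show (-2 : ℝ) < n by linarith)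
      have hu : n < 1 := by exact_mod_cast (show (n : ℝ) < 1 by linarith)
      interval_cases n <;> simp
    rcases hn' with h | h <;> [left; right] <;> linarith
  -- r - s is continuous
  have hcont : Continuous fun w => (r w : ℝ) - (s w : ℝ) :=
    (continuous_subtype_val.comp hr).sub (continuous_subtype_val.comp hs)
  obtain ⟨w0, hw0⟩ := hrsurj ⟨0, by norm_num⟩
  obtain ⟨w1, hw1⟩ := hrsurj ⟨1, by norm_num⟩
  have hv0 : (r w0 : ℝ) - (s w0 : ℝ) = -(1/2) := by
    rcases key w0 with h | h
    · exfalso; rw [hw0] at h; simp at h; have := (s w0).2.1; linarith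
    · exact h
  have hv1 : (r w1 : ℝ) - (s w1 : ℝ) = 1/2 := by
    rcases key w1 with h | h
    · exact h
    · exfalso; rw [hw1] at h; simp at h; have := (s w1).2.2; linarith
  have := intermediate_value_univ w0 w1 hcont
  have h0 : (0 : ℝ) ∈ Set.Icc ((r w0 : ℝ) - (s w0 : ℝ)) ((r w1 : ℝ) - (s w1 : ℝ)) := by
    rw [hv0, hv1]; constructor <;> norm_num
  obtain ⟨w, hw⟩ := this h0
  simp only at hw
  rcases key w with h | h <;> rw [hw] at h <;> norm_num at h
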